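/- arXiv:2310.00725 — 5 statements merged into one kernel-verified Lean document; each statement's English description precedes it below -/
import Mathlib

section
/- Let f : X → Y be an abstract simplicial map between abstract simplicial complexes, let α ∈ C^k(Y), β ∈ C^l(Y), and let [u_0,…,u_{k+l}] be a (k+l)-simplex of X such that the vertex map of f is NOT injective on {u_0,…,u_{k+l}} (i.e. f(u_i) = f(u_j) for some i ≠ j). Then the evaluation of the discrete wedge product of the pullbacks vanishes: ((f*α) ∧ (f*β))[u_0,…,u_{k+l}] = Σ_{τ ∈ S_{k+l+1}} sgn(τ) (f*α)[u_{τ(0)},…,u_{τ(k)}] · (f*β)[u_{τ(k)},…,u_{τ(k+l)}] / (k+l+1)! = 0, because the nonzero terms cancel in pairs of opposite sign. -/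
open Finset
open scoped Classical

/-- An abstract simplicial complex on a vertex type `V`: a downward-closed
family of nonempty finite sets of vertices. -/
structure ASC (V : Type*) where
  faces : Set (Finset V)
  nonempty_of_mem : ∀ s ∈ faces, s.Nonempty
  down_closed : ∀ s ∈ faces, ∀ t ⊆ s, t.Nonempty → t ∈ faces

variable {V W : Type*} [DecidableEq V] [DecidableEq W]

/-- `v` is an ordered `k`-simplex of `X`: an injective tuple of vertices spanning a face. -/
def IsSimplex (X : ASC V) (k : ℕ) (v : Fin (k + 1) → V) : Prop :=
  Function.Injective v ∧ Finset.image v Finset.univ ∈ X.faces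

/-- A (raw) `k`-cochain is alternating: permuting the vertices changes the value by
the sign of the permutation. -/
def IsAlternating (k : ℕ) (α : (Fin (k + 1) → V) → ℝ) : Prop :=
  ∀ (v : Fin (k + 1) → V) (τ : Equiv.Perm (Fin (k + 1))),
    α (v ∘ τ) = ((Equiv.Perm.sign τ : ℤ) : ℝ) * α v

/-- The coboundary (discrete exterior derivative) of a `k`-cochain. -/
noncomputable def coboundary (k : ℕ) (α : (Fin (k + 1) → V) → ℝ) :
    (Fin (k + 2) → V) → ℝ :=
  fun v => ∑ i : Fin (k + 2), (-1 : ℝ) ^ (i : ℕ) * α (v ∘ i.succAbove)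

/-- An abstract simplicial map: a vertex map carrying faces of `X` to faces of `Y`. -/
def IsSimplicialMap (X : ASC V) (Y : ASC W) (f : V → W) : Prop :=
  ∀ s ∈ X.faces, s.image f ∈ Y.faces

/-- Pullback of a `k`-cochain along a vertex map: `(f*α)(c) = α(f♯ c)`, where
`f♯` sends a tuple with distinct images to its image tuple and to `0` otherwise. -/
noncomputable def pullback (f : V → W) (k : ℕ) (α : (Fin (k + 1) → W) → ℝ) :
    (Fin (k + 1) → V) → ℝ :=
  fun v => if Function.Injective (f ∘ v) then α (f ∘ v) else 0

/-- The cup product of a `k`-cochain and an `l`-cochain. -/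
noncomputable def cup (k l : ℕ) (α : (Fin (k + 1) → V) → ℝ) (β : (Fin (l + 1) → V) → ℝ) :
    (Fin (k + l + 1) → V) → ℝ :=
  fun v => α (fun i => v ⟨(i : ℕ), by have := i.isLt; omega⟩) *
    β (fun i => v ⟨k + (i : ℕ), by have := i.isLt; omega⟩)

/-- The discrete (DEC) wedge product: the antisymmetrized cup product. -/
noncomputable def wedge (k l : ℕ) (α : (Fin (k + 1) → V) → ℝ) (β : (Fin (l + 1) → V) → ℝ) :
    (Fin (k + l + 1) → V) → ℝ :=
  fun v => (1 / (Nat.factorial (k + l + 1) : ℝ)) *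
    ∑ τ : Equiv.Perm (Fin (k + l + 1)),
      ((Equiv.Perm.sign τ : ℤ) : ℝ) * cup k l α β (v ∘ τ)


lemma pullback_congr (f : V → W) (k : ℕ) (α : (Fin (k + 1) → W) → ℝ)
    {v w : Fin (k + 1) → V} (h : f ∘ v = f ∘ w) :
    pullback f k α v = pullback f k α w := by
  rw [pullback, pullback, h]

/-- **Vanishing of the wedge of pullbacks in the non-injective case**: if the vertex map of
an abstract simplicial map `f : X → Y` identifies two vertices of a `(k+l)`-simplex
`[u_0,…,u_{k+l}]` of `X`, then the discrete wedge product of the pullbacks vanishes there. -/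
theorem wedge_pullback_eq_zero_of_not_injective {V W : Type*} [DecidableEq V] [DecidableEq W]
    (X : ASC V) (Y : ASC W) (f : V → W) (hf : IsSimplicialMap X Y f) (k l : ℕ)
    (α : (Fin (k + 1) → W) → ℝ) (hα : IsAlternating k α)
    (β : (Fin (l + 1) → W) → ℝ) (hβ : IsAlternating l β)
    (u : Fin (k + l + 1) → V) (hu : IsSimplex X (k + l) u)
    (hninj : ∃ i j : Fin (k + l + 1), i ≠ j ∧ f (u i) = f (u j)) :
    wedge k l (pullback f k α) (pullback f l β) u = 0 := by
  obtain ⟨i, j, hij, hfu⟩ := hninj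
  set σ := Equiv.swap i j with hσ
  have hfuσ : (f ∘ u) ∘ σ = f ∘ u := by
    funext x
    rcases eq_or_ne x i with rfl | hxi
    · simp [hσ, Function.comp, hfu]
    rcases eq_or_ne x j with rfl | hxj
    · simp [hσ, Function.comp, hfu]
    · simp [hσ, Equiv.swap_apply_of_ne_of_ne hxi hxj]
  have hc : ∀ τ : Equiv.Perm (Fin (k + l + 1)),
      cup k l (pullback f k α) (pullback f l β) (u ∘ ⇑(σ * τ))
        = cup k l (pullback f k α) (pullback f l β) (u ∘ τ) := by
    intro τ
    have h : f ∘ (u ∘ ⇑(σ * τ)) = f ∘ (u ∘ τ) := by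
      funext x
      exact congrFun hfuσ (τ x)
    unfold cup
    refine congrArg₂ (· * ·) ?_ ?_
    · exact pullback_congr f k α (by funext x; exact congrFun h _)
    · exact pullback_congr f l β (by funext x; exact congrFun h _)
  set S := ∑ τ : Equiv.Perm (Fin (k + l + 1)),
      ((Equiv.Perm.sign τ : ℤ) : ℝ) * cup k l (pullback f k α) (pullback f l β) (u ∘ τ)
    with hS
  have hneg : S = -S := by
    calc S = ∑ τ : Equiv.Perm (Fin (k + l + 1)),
        ((Equiv.Perm.sign (σ * τ) : ℤ) : ℝ) *
          cup k l (pullback f k α) (pullback f l β) (u ∘ ⇑(σ * τ)) := by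
          exact (Fintype.sum_equiv (Equiv.mulLeft σ) _ _ (fun τ => rfl)).symm
    _ = ∑ τ : Equiv.Perm (Fin (k + l + 1)),
        -(((Equiv.Perm.sign τ : ℤ) : ℝ) *
          cup k l (pullback f k α) (pullback f l β) (u ∘ τ)) := by
          refine Finset.sum_congr rfl (fun τ _ => ?_)
          rw [hc τ]
          have hsign : Equiv.Perm.sign (σ * τ) = - Equiv.Perm.sign τ := by
            rw [Equiv.Perm.sign_mul, hσ, Equiv.Perm.sign_swap hij, neg_one_mul]
          rw [hsign]
          push_cast
          ring
    _ = -S := by rw [Finset.sum_neg_distrib]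
  have hS0 : S = 0 := by linarith
  rw [wedge, ← hS, hS0, mul_zero]
end

section
/- Leibniz rule for the discrete exterior derivative and discrete wedge product: let X be an abstract simplicial complex, α ∈ C^k(X) and ω ∈ C^l(X). Then for every (k+l+1)-simplex σ of X (and hence by linearity for every (k+l+1)-chain c), one has (d(α ∧ ω))(σ) = ((dα) ∧ ω)(σ) + (−1)^k (α ∧ (dω))(σ). -/
open Finset
open scoped Classical

variable {V W : Type*} [DecidableEq V] [DecidableEq W]

theorem hc1 (k l : ℕ) : (k + 1) + l + 1 = k + l + 2 := Nat.add_right_comm k 1 l ▸ rfl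

theorem hc2 (k l : ℕ) : k + (l + 1) + 1 = k + l + 2 := Nat.add_assoc k l 1 ▸ rfl

lemma coe_succAbove' {n : ℕ} (i : Fin (n+1)) (m : Fin n) :
    ((i.succAbove m : Fin (n+1)) : ℕ) = if (m:ℕ) < (i:ℕ) then (m:ℕ) else (m:ℕ)+1 := by
  rcases lt_or_ge (m.castSucc) i with h | h
  · rw [Fin.succAbove_of_castSucc_lt _ _ h]
    rw [Fin.lt_def] at h
    simp only [Fin.coe_castSucc] at h ⊢
    rw [if_pos h]
  · rw [Fin.succAbove_of_le_castSucc _ _ h]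
    have h' : (i:ℕ) ≤ (m:ℕ) := by simpa [Fin.le_def] using h
    simp only [Fin.val_succ]
    rw [if_neg (by omega)]

noncomputable def permDecomp (n : ℕ) :
    (Fin (n+2) × Equiv.Perm (Fin (n+1))) ≃ Equiv.Perm (Fin (n+2)) where
  toFun p := (Fin.cycleRange p.1)⁻¹ * Equiv.Perm.decomposeFin.symm (0, p.2)
  invFun τ := (τ 0, (Equiv.Perm.decomposeFin (Fin.cycleRange (τ 0) * τ)).2)
  left_inv := by
    rintro ⟨i, ρ⟩
    have h0 : ((Fin.cycleRange i)⁻¹ * Equiv.Perm.decomposeFin.symm (0, ρ)) 0 = i := by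
      simp [Equiv.Perm.mul_apply, Equiv.Perm.inv_def]
    simp only [h0, mul_inv_cancel_left, Equiv.apply_symm_apply]
  right_inv := by
    intro τ
    have h1 : (Equiv.Perm.decomposeFin (Fin.cycleRange (τ 0) * τ)).1 = 0 := by
      have h2 := Equiv.Perm.decomposeFin_symm_apply_zero
        (Equiv.Perm.decomposeFin (Fin.cycleRange (τ 0) * τ)).1
        (Equiv.Perm.decomposeFin (Fin.cycleRange (τ 0) * τ)).2
      rw [Prod.mk.eta, Equiv.symm_apply_apply, Equiv.Perm.mul_apply, Fin.cycleRange_self] at h2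
      exact h2.symm
    simp only
    set d := Equiv.Perm.decomposeFin (Fin.cycleRange (τ 0) * τ) with hd
    have h3 : ((0 : Fin (n+2)), d.2) = d := by
      rw [← h1]
    rw [h3, hd, Equiv.symm_apply_apply, inv_mul_cancel_left]

lemma permDecomp_apply_succ (n : ℕ) (i : Fin (n+2)) (ρ : Equiv.Perm (Fin (n+1)))
    (m : Fin (n+1)) : permDecomp n (i, ρ) m.succ = i.succAbove (ρ m) := by
  show ((Fin.cycleRange i)⁻¹ * Equiv.Perm.decomposeFin.symm (0, ρ)) m.succ = _
  rw [Equiv.Perm.mul_apply, Equiv.Perm.decomposeFin_symm_apply_succ, Equiv.swap_self,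
    Equiv.refl_apply, Equiv.Perm.inv_def, Fin.cycleRange_symm_succ]

lemma permDecomp_sign (n : ℕ) (i : Fin (n+2)) (ρ : Equiv.Perm (Fin (n+1))) :
    ((Equiv.Perm.sign (permDecomp n (i, ρ)) : ℤ) : ℝ) =
      (-1 : ℝ)^(i:ℕ) * ((Equiv.Perm.sign ρ : ℤ) : ℝ) := by
  show ((Equiv.Perm.sign ((Fin.cycleRange i)⁻¹ * Equiv.Perm.decomposeFin.symm (0, ρ)) : ℤ) : ℝ) = _
  rw [map_mul, map_inv, Fin.sign_cycleRange, Equiv.Perm.decomposeFin.symm_sign, if_pos rfl,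
    one_mul]
  push_cast
  simp


lemma alt_coboundary (n : ℕ) (f : (Fin (n+1) → V) → ℝ) (v : Fin (n+2) → V) :
    ∑ τ : Equiv.Perm (Fin (n+2)), ((Equiv.Perm.sign τ : ℤ) : ℝ) *
        ∑ j : Fin (n+2), (-1:ℝ)^(j:ℕ) * f (v ∘ τ ∘ j.succAbove) =
      ((n:ℝ)+2) * ∑ i : Fin (n+2), (-1:ℝ)^(i:ℕ) *
        ∑ ρ : Equiv.Perm (Fin (n+1)), ((Equiv.Perm.sign ρ : ℤ) : ℝ) * f (v ∘ i.succAbove ∘ ρ) := by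
  have step2 : ∑ τ : Equiv.Perm (Fin (n+2)), ((Equiv.Perm.sign τ : ℤ) : ℝ) * f (v ∘ τ ∘ Fin.succ)
      = ∑ i : Fin (n+2), (-1:ℝ)^(i:ℕ) *
        ∑ ρ : Equiv.Perm (Fin (n+1)), ((Equiv.Perm.sign ρ : ℤ) : ℝ) * f (v ∘ i.succAbove ∘ ρ) := by
    rw [← Fintype.sum_equiv (permDecomp n)
      (fun p => ((Equiv.Perm.sign (permDecomp n p) : ℤ) : ℝ) * f (v ∘ (permDecomp n p) ∘ Fin.succ))
      (fun τ => ((Equiv.Perm.sign τ : ℤ) : ℝ) * f (v ∘ τ ∘ Fin.succ)) (fun p => rfl)]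
    rw [Fintype.sum_prod_type]
    refine Finset.sum_congr rfl fun i _ => ?_
    rw [Finset.mul_sum]
    refine Finset.sum_congr rfl fun ρ _ => ?_
    rw [permDecomp_sign, mul_assoc]
    have harg : (v ∘ ⇑(permDecomp n (i, ρ)) ∘ Fin.succ) = v ∘ i.succAbove ∘ ⇑ρ :=
      funext fun m => congrArg v (permDecomp_apply_succ n i ρ m)
    rw [harg]
  have key : ∀ j : Fin (n+2),
      ∑ τ : Equiv.Perm (Fin (n+2)), ((Equiv.Perm.sign τ : ℤ) : ℝ) * f (v ∘ τ ∘ j.succAbove)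
      = (-1:ℝ)^(j:ℕ) * ∑ i : Fin (n+2), (-1:ℝ)^(i:ℕ) *
        ∑ ρ : Equiv.Perm (Fin (n+1)), ((Equiv.Perm.sign ρ : ℤ) : ℝ) * f (v ∘ i.succAbove ∘ ρ) := by
    intro j
    rw [← step2, Finset.mul_sum]
    refine Fintype.sum_equiv (Equiv.mulRight (Fin.cycleRange j)⁻¹) _ _ fun τ => ?_
    simp only [Equiv.coe_mulRight]
    have hsgn : ((Equiv.Perm.sign (τ * (Fin.cycleRange j)⁻¹) : ℤ) : ℝ)
        = ((Equiv.Perm.sign τ : ℤ) : ℝ) * (-1:ℝ)^(j:ℕ) := by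
      rw [map_mul, map_inv, Fin.sign_cycleRange]
      push_cast
      simp
    have harg : v ∘ ⇑(τ * (Fin.cycleRange j)⁻¹) ∘ Fin.succ = v ∘ ⇑τ ∘ j.succAbove := by
      funext m
      show v ((τ * (Fin.cycleRange j)⁻¹) m.succ) = v (τ (j.succAbove m))
      rw [Equiv.Perm.mul_apply, Equiv.Perm.inv_def, Fin.cycleRange_symm_succ]
    rw [hsgn, harg]
    have h1 : (-1:ℝ)^(j:ℕ) * (-1:ℝ)^(j:ℕ) = 1 := by
      rw [← pow_add]; exact Even.neg_one_pow ⟨(j:ℕ), rfl⟩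
    linear_combination (-(((Equiv.Perm.sign τ : ℤ) : ℝ) * f (v ∘ ⇑τ ∘ j.succAbove))) * h1
  calc ∑ τ : Equiv.Perm (Fin (n+2)), ((Equiv.Perm.sign τ : ℤ) : ℝ) *
        ∑ j : Fin (n+2), (-1:ℝ)^(j:ℕ) * f (v ∘ τ ∘ j.succAbove)
      = ∑ j : Fin (n+2), (-1:ℝ)^(j:ℕ) *
          ∑ τ : Equiv.Perm (Fin (n+2)), ((Equiv.Perm.sign τ : ℤ) : ℝ) * f (v ∘ τ ∘ j.succAbove) := by
        calc ∑ τ : Equiv.Perm (Fin (n+2)), ((Equiv.Perm.sign τ : ℤ) : ℝ) *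
              ∑ j : Fin (n+2), (-1:ℝ)^(j:ℕ) * f (v ∘ τ ∘ j.succAbove)
            = ∑ τ : Equiv.Perm (Fin (n+2)), ∑ j : Fin (n+2),
                ((Equiv.Perm.sign τ : ℤ) : ℝ) * ((-1:ℝ)^(j:ℕ) * f (v ∘ τ ∘ j.succAbove)) :=
              Finset.sum_congr rfl fun τ _ => Finset.mul_sum _ _ _
          _ = ∑ j : Fin (n+2), ∑ τ : Equiv.Perm (Fin (n+2)),
                ((Equiv.Perm.sign τ : ℤ) : ℝ) * ((-1:ℝ)^(j:ℕ) * f (v ∘ τ ∘ j.succAbove)) :=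
              Finset.sum_comm
          _ = ∑ j : Fin (n+2), (-1:ℝ)^(j:ℕ) *
                ∑ τ : Equiv.Perm (Fin (n+2)), ((Equiv.Perm.sign τ : ℤ) : ℝ) * f (v ∘ τ ∘ j.succAbove) := by
              refine Finset.sum_congr rfl fun j _ => ?_
              rw [Finset.mul_sum]
              exact Finset.sum_congr rfl fun τ _ => by ring
    _ = ∑ j : Fin (n+2), ((-1:ℝ)^(j:ℕ) * (-1:ℝ)^(j:ℕ)) *
          ∑ i : Fin (n+2), (-1:ℝ)^(i:ℕ) *
            ∑ ρ : Equiv.Perm (Fin (n+1)), ((Equiv.Perm.sign ρ : ℤ) : ℝ) * f (v ∘ i.succAbove ∘ ρ) := by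
        refine Finset.sum_congr rfl fun j _ => ?_
        rw [key j, mul_assoc]
    _ = ((n:ℝ)+2) * ∑ i : Fin (n+2), (-1:ℝ)^(i:ℕ) *
          ∑ ρ : Equiv.Perm (Fin (n+1)), ((Equiv.Perm.sign ρ : ℤ) : ℝ) * f (v ∘ i.succAbove ∘ ρ) := by
        have h1 : ∀ j : Fin (n+2), (-1:ℝ)^(j:ℕ) * (-1:ℝ)^(j:ℕ) = 1 := fun j => by
          rw [← pow_add]
          exact Even.neg_one_pow ⟨(j:ℕ), rfl⟩
        simp only [h1, one_mul]
        rw [Finset.sum_const, Finset.card_univ, Fintype.card_fin, nsmul_eq_mul]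
        push_cast
        ring
namespace CupLeibniz

variable (k l : ℕ)

/-- index helper -/
def idxF (k l : ℕ) (m : ℕ) : Fin (k+l+2) := ⟨m % (k+l+2), Nat.mod_lt _ (by omega)⟩

lemma idxF_coe (m : ℕ) (h : m < k+l+2) : ((idxF k l m : Fin (k+l+2)) : ℕ) = m :=
  Nat.mod_eq_of_lt h

variable (α : (Fin (k+1) → V) → ℝ) (ω : (Fin (l+1) → V) → ℝ) (v : Fin (k+l+2) → V)

def AF (i : ℕ) : ℝ := α fun m => v (idxF k l (if (m:ℕ) < i then (m:ℕ) else (m:ℕ)+1))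

def BF (i : ℕ) : ℝ :=
  ω fun m => v (idxF k l (if k+(m:ℕ) < i then k+(m:ℕ) else k+(m:ℕ)+1))

def DF (j : ℕ) : ℝ :=
  ω fun m => v (idxF k l (k + (if (m:ℕ) < j then (m:ℕ) else (m:ℕ)+1)))

def AcF : ℝ := α fun m => v (idxF k l (m:ℕ))

lemma L1 : coboundary (k+l) (cup k l α ω) v =
    ∑ i ∈ Finset.range (k+l+2), (-1:ℝ)^i * (AF k l α v i * BF k l ω v i) := by
  rw [← Fin.sum_univ_eq_sum_range (fun i => (-1:ℝ)^i * (AF k l α v i * BF k l ω v i)) (k+l+2)]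
  refine Finset.sum_congr rfl fun i _ => ?_
  show (-1:ℝ)^(i:ℕ) * cup k l α ω (v ∘ i.succAbove) = _
  congr 1
  show α _ * ω _ = _
  congr 1
  · refine congrArg α (funext fun m => ?_)
    refine congrArg v (Fin.ext ?_)
    rw [coe_succAbove', idxF_coe _ _ _ (by have := m.isLt; split_ifs <;> omega)]
  · refine congrArg ω (funext fun m => ?_)
    refine congrArg v (Fin.ext ?_)
    rw [coe_succAbove', idxF_coe _ _ _ (by have := m.isLt; split_ifs <;> omega)]

lemma L2 : cup (k+1) l (coboundary k α) ω
      (v ∘ Fin.cast (hc1 k l)) =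
    (∑ i ∈ Finset.range (k+2), (-1:ℝ)^i * AF k l α v i) * DF k l ω v 0 := by
  show coboundary k α _ * ω _ = _
  congr 1
  · show ∑ i : Fin (k+2), (-1:ℝ)^(i:ℕ) * α _ = _
    rw [← Fin.sum_univ_eq_sum_range (fun i => (-1:ℝ)^i * AF k l α v i) (k+2)]
    refine Finset.sum_congr rfl fun i _ => ?_
    congr 1
    refine congrArg α (funext fun m => congrArg v (Fin.ext ?_))
    rw [idxF_coe _ _ _ (by have := m.isLt; have := i.isLt; split_ifs <;> omega)]
    show ((Fin.cast _ ⟨((i.succAbove m : Fin (k+2)) : ℕ), _⟩ : Fin (k+l+2)) : ℕ) = _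
    rw [Fin.coe_cast]
    show ((i.succAbove m : Fin (k+2)) : ℕ) = _
    rw [coe_succAbove']
  · refine congrArg ω (funext fun m => congrArg v (Fin.ext ?_))
    rw [idxF_coe _ _ _ (by have := m.isLt; split_ifs <;> omega)]
    show ((Fin.cast _ ⟨(k+1) + (m : ℕ), _⟩ : Fin (k+l+2)) : ℕ) = _
    rw [Fin.coe_cast]
    show k+1+(m:ℕ) = k + (if (m:ℕ) < 0 then (m:ℕ) else (m:ℕ)+1)
    rw [if_neg (by omega)]
    omega

lemma L3 : cup k (l+1) α (coboundary l ω)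
      (v ∘ Fin.cast (hc2 k l)) =
    AcF k l α v * ∑ j ∈ Finset.range (l+2), (-1:ℝ)^j * DF k l ω v j := by
  show α _ * coboundary l ω _ = _
  congr 1
  · refine congrArg α (funext fun m => congrArg v (Fin.ext ?_))
    rw [idxF_coe _ _ _ (by have := m.isLt; omega)]
    show ((Fin.cast _ ⟨(m : ℕ), _⟩ : Fin (k+l+2)) : ℕ) = _
    rw [Fin.coe_cast]
  · show ∑ j : Fin (l+2), (-1:ℝ)^(j:ℕ) * ω _ = _
    rw [← Fin.sum_univ_eq_sum_range (fun j => (-1:ℝ)^j * DF k l ω v j) (l+2)]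
    refine Finset.sum_congr rfl fun j _ => ?_
    congr 1
    refine congrArg ω (funext fun m => congrArg v (Fin.ext ?_))
    rw [idxF_coe _ _ _ (by have := m.isLt; have := j.isLt; split_ifs <;> omega)]
    show ((Fin.cast _ ⟨k + ((j.succAbove m : Fin (l+2)) : ℕ), _⟩ : Fin (k+l+2)) : ℕ) = _
    rw [Fin.coe_cast]
    show k + ((j.succAbove m : Fin (l+2)) : ℕ) = _
    rw [coe_succAbove']

lemma L4 (i : ℕ) (hi : i ≤ k) : BF k l ω v i = DF k l ω v 0 :=
  congrArg ω (funext fun m => congrArg (fun t => v (idxF k l t)) (by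
    rw [if_neg (by omega), if_neg (by omega)]
    omega))

lemma L5 (j : ℕ) (hj : k + 1 ≤ j) : AF k l α v j = AcF k l α v :=
  congrArg α (funext fun m => congrArg (fun t => v (idxF k l t)) (by
    rw [if_pos (by have := m.isLt; omega)]))

lemma L6 (j : ℕ) : BF k l ω v (k+1+j) = DF k l ω v (j+1) :=
  congrArg ω (funext fun m => congrArg (fun t => v (idxF k l t)) (by
    split_ifs <;> omega))

lemma cup_coboundary :
    coboundary (k+l) (cup k l α ω) v =
      cup (k+1) l (coboundary k α) ω
          (v ∘ Fin.cast (hc1 k l)) +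
        (-1:ℝ)^k * cup k (l+1) α (coboundary l ω)
          (v ∘ Fin.cast (hc2 k l)) := by
  rw [L1, L2, L3]
  conv_lhs => rw [show k+l+2 = (k+1)+(l+1) from by omega]
  rw [Finset.sum_range_add,
    Finset.sum_range_succ (fun i => (-1:ℝ)^i * AF k l α v i) (k+1),
    Finset.sum_range_succ' (fun j => (-1:ℝ)^j * DF k l ω v j) (l+1)]
  have e1 : ∑ i ∈ Finset.range (k+1), (-1:ℝ)^i * (AF k l α v i * BF k l ω v i)
      = (∑ i ∈ Finset.range (k+1), (-1:ℝ)^i * AF k l α v i) * DF k l ω v 0 := by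
    rw [Finset.sum_mul]
    refine Finset.sum_congr rfl fun i hi => ?_
    rw [L4 k l ω v i (by have := Finset.mem_range.mp hi; omega)]
    ring
  have e2 : ∑ x ∈ Finset.range (l+1), (-1:ℝ)^(k+1+x) *
        (AF k l α v (k+1+x) * BF k l ω v (k+1+x))
      = (-1:ℝ)^k * (AcF k l α v * ∑ x ∈ Finset.range (l+1), (-1:ℝ)^(x+1) * DF k l ω v (x+1)) := by
    rw [Finset.mul_sum, Finset.mul_sum]
    refine Finset.sum_congr rfl fun x _ => ?_
    rw [L5 k l α v (k+1+x) (by omega), L6 k l ω v x,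
      show k+1+x = k+(x+1) from by omega, pow_add]
    ring
  rw [e1, e2, L5 k l α v (k+1) (by omega)]
  ring

end CupLeibniz

section Assembly

lemma perm_transport {m n : ℕ} (h : m = n) (g : (Fin m → V) → ℝ) (w : Fin n → V) :
    ∑ τ' : Equiv.Perm (Fin m), ((Equiv.Perm.sign τ' : ℤ) : ℝ) * g ((w ∘ Fin.cast h) ∘ τ') =
    ∑ τ : Equiv.Perm (Fin n), ((Equiv.Perm.sign τ : ℤ) : ℝ) * g ((w ∘ τ) ∘ Fin.cast h) := by
  refine Fintype.sum_equiv (Equiv.permCongr (finCongr h)) _ _ fun τ' => ?_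
  rw [Equiv.Perm.sign_permCongr]
  congr 1

theorem leibniz_wedge' (k l : ℕ)
    (α : (Fin (k + 1) → V) → ℝ) (ω : (Fin (l + 1) → V) → ℝ) (σ : Fin (k + l + 2) → V) :
    coboundary (k + l) (wedge k l α ω) σ =
      wedge (k + 1) l (coboundary k α) ω
          (σ ∘ Fin.cast (hc1 k l)) +
        (-1 : ℝ) ^ k *
          wedge k (l + 1) α (coboundary l ω)
            (σ ∘ Fin.cast (hc2 k l)) := by
  have hfact1 : (Nat.factorial (k+l+2) : ℝ) ≠ 0 := by positivity
  have hfact2 : ((k+l:ℝ)+2) ≠ 0 := by positivity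
  have hA : coboundary (k+l) (wedge k l α ω) σ
      = (1 / (Nat.factorial (k+l+1) : ℝ)) * ∑ j : Fin (k+l+2), (-1:ℝ)^(j:ℕ) *
          ∑ ρ : Equiv.Perm (Fin (k+l+1)), ((Equiv.Perm.sign ρ : ℤ) : ℝ) *
            cup k l α ω (σ ∘ j.succAbove ∘ ρ) := by
    show ∑ j : Fin (k+l+2), (-1:ℝ)^(j:ℕ) * wedge k l α ω (σ ∘ j.succAbove) = _
    rw [Finset.mul_sum]
    refine Finset.sum_congr rfl fun j _ => ?_
    show (-1:ℝ)^(j:ℕ) * ((1 / (Nat.factorial (k+l+1) : ℝ)) *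
        ∑ ρ : Equiv.Perm (Fin (k+l+1)), ((Equiv.Perm.sign ρ : ℤ) : ℝ) *
          cup k l α ω (σ ∘ j.succAbove ∘ ρ)) = _
    ring
  have halt := alt_coboundary (k+l) (cup k l α ω) σ
  have hX : ∑ i : Fin (k+l+2), (-1:ℝ)^(i:ℕ) *
        ∑ ρ : Equiv.Perm (Fin (k+l+1)), ((Equiv.Perm.sign ρ : ℤ) : ℝ) *
          cup k l α ω (σ ∘ i.succAbove ∘ ρ)
      = (1/((k+l:ℝ)+2)) * ∑ τ : Equiv.Perm (Fin (k+l+2)),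
          ((Equiv.Perm.sign τ : ℤ) : ℝ) * ∑ j : Fin (k+l+2), (-1:ℝ)^(j:ℕ) *
            cup k l α ω (σ ∘ τ ∘ j.succAbove) := by
    rw [halt]
    push_cast
    field_simp
  have hC : ∀ τ : Equiv.Perm (Fin (k+l+2)),
      ∑ j : Fin (k+l+2), (-1:ℝ)^(j:ℕ) * cup k l α ω (σ ∘ τ ∘ j.succAbove)
      = cup (k+1) l (coboundary k α) ω
          ((σ ∘ τ) ∘ Fin.cast (hc1 k l)) +
        (-1:ℝ)^k * cup k (l+1) α (coboundary l ω)
          ((σ ∘ τ) ∘ Fin.cast (hc2 k l)) := fun τ =>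
    CupLeibniz.cup_coboundary k l α ω (σ ∘ τ)
  have hW1 : wedge (k+1) l (coboundary k α) ω
        (σ ∘ Fin.cast (hc1 k l))
      = (1 / (Nat.factorial (k+l+2) : ℝ)) * ∑ τ : Equiv.Perm (Fin (k+l+2)),
          ((Equiv.Perm.sign τ : ℤ) : ℝ) * cup (k+1) l (coboundary k α) ω
            ((σ ∘ τ) ∘ Fin.cast (hc1 k l)) := by
    show (1 / (Nat.factorial ((k+1)+l+1) : ℝ)) * _ = _
    rw [perm_transport (by omega : (k+1)+l+1 = k+l+2) (cup (k+1) l (coboundary k α) ω) σ,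
      congrArg Nat.factorial (by omega : (k+1)+l+1 = k+l+2)]
  have hW2 : wedge k (l+1) α (coboundary l ω)
        (σ ∘ Fin.cast (hc2 k l))
      = (1 / (Nat.factorial (k+l+2) : ℝ)) * ∑ τ : Equiv.Perm (Fin (k+l+2)),
          ((Equiv.Perm.sign τ : ℤ) : ℝ) * cup k (l+1) α (coboundary l ω)
            ((σ ∘ τ) ∘ Fin.cast (hc2 k l)) := by
    show (1 / (Nat.factorial (k+(l+1)+1) : ℝ)) * _ = _
    rw [perm_transport (by omega : k+(l+1)+1 = k+l+2) (cup k (l+1) α (coboundary l ω)) σ,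
      congrArg Nat.factorial (by omega : k+(l+1)+1 = k+l+2)]
  have hsplit : ∑ τ : Equiv.Perm (Fin (k+l+2)), ((Equiv.Perm.sign τ : ℤ) : ℝ) *
        ∑ j : Fin (k+l+2), (-1:ℝ)^(j:ℕ) * cup k l α ω (σ ∘ τ ∘ j.succAbove)
      = (∑ τ : Equiv.Perm (Fin (k+l+2)), ((Equiv.Perm.sign τ : ℤ) : ℝ) *
          cup (k+1) l (coboundary k α) ω
            ((σ ∘ τ) ∘ Fin.cast (hc1 k l)))
        + (-1:ℝ)^k * ∑ τ : Equiv.Perm (Fin (k+l+2)), ((Equiv.Perm.sign τ : ℤ) : ℝ) *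
            cup k (l+1) α (coboundary l ω)
              ((σ ∘ τ) ∘ Fin.cast (hc2 k l)) := by
    rw [Finset.mul_sum, ← Finset.sum_add_distrib]
    refine Finset.sum_congr rfl fun τ _ => ?_
    rw [hC τ]
    ring
  rw [hA, hX, hW1, hW2, hsplit]
  have hfs : (Nat.factorial (k+l+2) : ℝ) = ((k+l:ℝ)+2) * (Nat.factorial (k+l+1) : ℝ) := by
    rw [show k+l+2 = (k+l+1)+1 from rfl, Nat.factorial_succ]
    push_cast
    ring
  rw [hfs]
  have h3 : (Nat.factorial (k+l+1) : ℝ) ≠ 0 := by positivity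
  rw [one_div, one_div, one_div, mul_inv]
  generalize ((Nat.factorial (k+l+1) : ℝ))⁻¹ = a at *
  generalize ((k+l:ℝ)+2)⁻¹ = b at *
  ring

end Assembly


/-- **Leibniz rule** for the discrete exterior derivative and the discrete wedge product:
`d(α ∧ ω) = (dα) ∧ ω + (−1)ᵏ α ∧ (dω)` evaluated on every `(k+l+1)`-simplex of `X`
(and hence, by linearity, on every `(k+l+1)`-chain). -/
theorem leibniz_wedge {V : Type*} [DecidableEq V] (X : ASC V) (k l : ℕ)
    (α : (Fin (k + 1) → V) → ℝ) (hα : IsAlternating k α)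
    (ω : (Fin (l + 1) → V) → ℝ) (hω : IsAlternating l ω)
    (σ : Fin (k + l + 2) → V) (hσ : IsSimplex X (k + l + 1) σ) :
    coboundary (k + l) (wedge k l α ω) σ =
      wedge (k + 1) l (coboundary k α) ω
          (σ ∘ Fin.cast (by omega : (k + 1) + l + 1 = k + l + 2)) +
        (-1 : ℝ) ^ k *
          wedge k (l + 1) α (coboundary l ω)
            (σ ∘ Fin.cast (by omega : k + (l + 1) + 1 = k + l + 2)) := by
  exact leibniz_wedge' k l α ω σ
end

section
/- Averaging interpretation of the discrete wedge product (second form): let X be an abstract simplicial complex, α ∈ C^k(X), β ∈ C^l(X), and σ a (k+l)-simplex in X. Then (α ∧ β)(σ) = (1 / C(k+l+1, l+1)) · Σ_{f an l-face of σ} ( (1/(l+1)) Σ_{v a vertex of f} α(v ∗ (σ∖f)) ) · β(f), where the sum is over all l-dimensional faces f of σ and, inside, over all vertices v of f; here σ∖f is the face of σ spanned by the vertices of σ not in f, v ∗ (σ∖f) is the simplex spanned by v together with the vertices of σ∖f, and the orientations of f and v ∗ (σ∖f) are chosen so that the vertex ordering (f∖{v}, v, σ∖f) corresponds to an even permutation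 of the chosen ordering of σ in S_{k+l+1}. -/
open Finset
open scoped Classical

variable {V W : Type*} [DecidableEq V] [DecidableEq W]

namespace WH
open Equiv Equiv.Perm

variable (k l : ℕ)

def ι₁ (i : Fin (k+1)) : Fin (k+l+1) := ⟨i, (by omega : (i : ℕ) < k + l + 1 + 0)⟩
def ι₂ (j : Fin (l+1)) : Fin (k+l+1) := ⟨k + j, (by omega : k + (j : ℕ) < k + l + 1 + 0)⟩
def kk : Fin (k+l+1) := ⟨k, (by omega : k < k + l + 1 + 0)⟩

lemma ι₁_inj : Function.Injective (ι₁ k l) := by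
  intro a b h
  have := congrArg Fin.val h
  simp only [ι₁] at this
  exact Fin.ext this

lemma ι₂_inj : Function.Injective (ι₂ k l) := by
  intro a b h
  have := congrArg Fin.val h
  simp only [ι₂] at this
  exact Fin.ext (by omega)

def e₁ : Fin (k+1) ≃ {m : Fin (k+l+1) // (m : ℕ) < k + 1} where
  toFun i := ⟨ι₁ k l i, i.isLt⟩
  invFun m := ⟨(m : Fin (k+l+1)).1, m.2⟩
  left_inv i := rfl
  right_inv m := rfl

def e₂ : Fin (l+1) ≃ {m : Fin (k+l+1) // k ≤ (m : ℕ)} where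
  toFun j := ⟨ι₂ k l j, Nat.le_add_right k j⟩
  invFun m := ⟨(m : Fin (k+l+1)).1 - k, by have := (m : Fin (k+l+1)).isLt; have := m.2; omega⟩
  left_inv j := by ext; simp [ι₂]
  right_inv m := by ext; have := m.2; simp [ι₂]; omega

noncomputable def blk (u₁ : Perm (Fin (k+1))) (u₂ : Perm (Fin (l+1))) :
    Perm (Fin (k+l+1)) :=
  (u₁.extendDomain (e₁ k l)) * (u₂.extendDomain (e₂ k l))

lemma blk_apply_ι₁ (u₁ : Perm (Fin (k+1))) (u₂ : Perm (Fin (l+1)))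
    (h₂ : u₂ 0 = 0) (i : Fin (k+1)) :
    blk k l u₁ u₂ (ι₁ k l i) = ι₁ k l (u₁ i) := by
  have step1 : (u₂.extendDomain (e₂ k l)) (ι₁ k l i) = ι₁ k l i := by
    by_cases h : k ≤ (i : ℕ)
    · have hik : (i : ℕ) = k := by have := i.isLt; omega
      have he : ι₁ k l i = ((e₂ k l) 0 : Fin (k+l+1)) := by
        apply Fin.ext; simp [ι₁, ι₂, e₂, hik]
      rw [he, Perm.extendDomain_apply_image, h₂]
    · exact Equiv.Perm.extendDomain_apply_not_subtype _ _ (by simpa [ι₁] using h)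
  show (u₁.extendDomain (e₁ k l)) ((u₂.extendDomain (e₂ k l)) (ι₁ k l i)) = _
  rw [step1]
  have he : ι₁ k l i = ((e₁ k l) i : Fin (k+l+1)) := rfl
  rw [he, Perm.extendDomain_apply_image]
  rfl

lemma blk_apply_ι₂ (u₁ : Perm (Fin (k+1))) (u₂ : Perm (Fin (l+1)))
    (h₁ : u₁ ⟨k, Nat.lt_succ_self k⟩ = ⟨k, Nat.lt_succ_self k⟩) (h₂ : u₂ 0 = 0) (j : Fin (l+1)) :
    blk k l u₁ u₂ (ι₂ k l j) = ι₂ k l (u₂ j) := by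
  have step1 : (u₂.extendDomain (e₂ k l)) (ι₂ k l j) = ι₂ k l (u₂ j) := by
    have he : ι₂ k l j = ((e₂ k l) j : Fin (k+l+1)) := rfl
    rw [he, Perm.extendDomain_apply_image]
    rfl
  show (u₁.extendDomain (e₁ k l)) ((u₂.extendDomain (e₂ k l)) (ι₂ k l j)) = _
  rw [step1]
  by_cases h : ((ι₂ k l (u₂ j) : Fin (k+l+1)) : ℕ) < k + 1
  · have hz : u₂ j = 0 := by
      have : k + ((u₂ j : ℕ)) < k + 1 := h
      have : (u₂ j : ℕ) = 0 := by omega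
      exact Fin.ext this
    have he : ι₂ k l (u₂ j) = ((e₁ k l) ⟨k, Nat.lt_succ_self k⟩ : Fin (k+l+1)) := by
      apply Fin.ext; simp [ι₁, ι₂, e₁, hz]
    rw [he, Perm.extendDomain_apply_image, h₁, ← he]
  · exact Equiv.Perm.extendDomain_apply_not_subtype _ _ h

lemma sign_blk (u₁ : Perm (Fin (k+1))) (u₂ : Perm (Fin (l+1))) :
    sign (blk k l u₁ u₂) = sign u₁ * sign u₂ := by
  simp [blk, map_mul, Perm.sign_extendDomain]

lemma card_fix (m : ℕ) (x : Fin (m+1)) :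
    (Finset.univ.filter (fun u : Perm (Fin (m+1)) => u x = x)).card = Nat.factorial m := by
  rw [← Fintype.card_subtype]
  have E : {u : Perm (Fin (m+1)) // u x = x} ≃ Perm {a : Fin (m+1) // a ≠ x} := by
    refine (Equiv.subtypeEquivRight ?_).trans (Equiv.Perm.subtypeEquivSubtypePerm (· ≠ x)).symm
    intro f
    constructor
    · intro hf a ha
      rw [not_not] at ha; subst ha; exact hf
    · intro hf; exact hf x (by simp)
  rw [Fintype.card_congr E, Fintype.card_perm]
  congr 1
  have : Fintype.card {a : Fin (m+1) // a ≠ x} = Fintype.card (Fin (m+1)) - Fintype.card {a : Fin (m+1) // a = x} :=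
    Fintype.card_subtype_compl _
  rw [this, Fintype.card_subtype_eq, Fintype.card_fin]; omega

lemma image_eq_of_inj_of_maps {n m : ℕ} (f : Fin m → Fin n) (hf : Function.Injective f)
    (F : Finset (Fin n)) (hmem : ∀ j, f j ∈ F) (hcard : F.card = m) :
    Finset.image f Finset.univ = F := by
  apply Finset.eq_of_subset_of_card_le
  · intro x hx
    rcases Finset.mem_image.1 hx with ⟨j, _, rfl⟩
    exact hmem j
  · rw [Finset.card_image_of_injective _ hf, Finset.card_univ, Fintype.card_fin, hcard]

lemma range_eq_coe {n m : ℕ} (f : Fin m → Fin n) (F : Finset (Fin n))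
    (h : Finset.image f Finset.univ = F) : Set.range f = ↑F := by
  rw [← h, Finset.coe_image, Finset.coe_univ, Set.image_univ]

noncomputable def relPerm {γ : Type*} {m : ℕ} (f g : Fin m → γ) (hf : Function.Injective f)
    (hg : Function.Injective g) (h : Set.range f = Set.range g) : Perm (Fin m) :=
  (Equiv.ofInjective f hf).trans ((Equiv.setCongr h).trans (Equiv.ofInjective g hg).symm)

lemma relPerm_apply {γ : Type*} {m : ℕ} (f g : Fin m → γ) (hf : Function.Injective f)
    (hg : Function.Injective g) (h : Set.range f = Set.range g) (i : Fin m) :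
    g (relPerm f g hf hg h i) = f i := by
  simp only [relPerm, Equiv.trans_apply]
  rw [Equiv.apply_ofInjective_symm hg]
  rfl

lemma decompose (τ : Perm (Fin (k+l+1)))
    (F : Finset (Fin (k+l+1))) (hF : F.card = l + 1)
    (v : Fin (k+l+1)) (hv : v ∈ F)
    (bF : Fin (l+1) → Fin (k+l+1)) (hbinj : Function.Injective bF) (hbmem : ∀ j, bF j ∈ F)
    (cF : Fin (k+1) → Fin (k+l+1)) (hcinj : Function.Injective cF)
    (hcmem : ∀ i, cF i ∈ insert v (Finset.univ \ F))
    (ρ : Perm (Fin (k+l+1))) (s : Perm (Fin (l+1))) (s' : Perm (Fin (k+1)))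
    (hρv : ρ (kk k l) = v)
    (hρb : ∀ j, ρ (ι₂ k l j) = bF (s j))
    (hρc : ∀ i, ρ (ι₁ k l i) = cF (s' i))
    (himg : Finset.image (fun j => τ (ι₂ k l j)) Finset.univ = F)
    (hτv : τ (kk k l) = v) :
    ∃ u₁ u₂, u₁ ⟨k, Nat.lt_succ_self k⟩ = ⟨k, Nat.lt_succ_self k⟩ ∧ u₂ 0 = 0 ∧
      τ = ρ * blk k l u₁ u₂ := by
  have hcardG : (insert v (Finset.univ \ F)).card = k + 1 := by
    have hvnot : v ∉ Finset.univ \ F := by simp [hv]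
    rw [Finset.card_insert_of_notMem hvnot, Finset.card_sdiff_of_subset (Finset.subset_univ F),
      Finset.card_univ, Fintype.card_fin, hF]
    omega
  have hτι₂inj : Function.Injective (fun j => τ (ι₂ k l j)) :=
    fun a b h => ι₂_inj k l (τ.injective h)
  have hτι₁inj : Function.Injective (fun i => τ (ι₁ k l i)) :=
    fun a b h => ι₁_inj k l (τ.injective h)
  have hkkι₂0 : ι₂ k l 0 = kk k l := by
    apply Fin.ext; simp [ι₂, kk]
  have hτι₁mem : ∀ i, τ (ι₁ k l i) ∈ insert v (Finset.univ \ F) := by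
    intro i
    by_cases hik : (i : ℕ) = k
    · have : ι₁ k l i = kk k l := Fin.ext hik
      rw [this, hτv]
      exact Finset.mem_insert_self _ _
    · apply Finset.mem_insert_of_mem
      rw [Finset.mem_sdiff]
      refine ⟨Finset.mem_univ _, fun hmem => ?_⟩
      rw [← himg] at hmem
      rcases Finset.mem_image.1 hmem with ⟨j, _, hj⟩
      have := congrArg Fin.val (τ.injective hj)
      simp only [ι₁, ι₂] at this
      have := i.isLt
      omega
  have himgc : Finset.image cF Finset.univ = insert v (Finset.univ \ F) :=
    image_eq_of_inj_of_maps cF hcinj _ hcmem hcardG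
  have himgτ1 : Finset.image (fun i => τ (ι₁ k l i)) Finset.univ = insert v (Finset.univ \ F) :=
    image_eq_of_inj_of_maps _ hτι₁inj _ hτι₁mem hcardG
  have hrange1 : Set.range (fun i => τ (ι₁ k l i)) = Set.range cF := by
    rw [range_eq_coe _ _ himgτ1, range_eq_coe _ _ himgc]
  have hrange2 : Set.range (fun j => τ (ι₂ k l j)) = Set.range bF := by
    rw [range_eq_coe _ _ himg, range_eq_coe _ _ (image_eq_of_inj_of_maps bF hbinj F hbmem hF)]
  set s'' := relPerm _ cF hτι₁inj hcinj hrange1 with hs''def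
  set t := relPerm _ bF hτι₂inj hbinj hrange2 with htdef
  have hs'' : ∀ i, cF (s'' i) = τ (ι₁ k l i) := relPerm_apply _ cF hτι₁inj hcinj hrange1
  have ht : ∀ j, bF (t j) = τ (ι₂ k l j) := relPerm_apply _ bF hτι₂inj hbinj hrange2
  refine ⟨s''.trans s'.symm, t.trans s.symm, ?_, ?_, ?_⟩
  · have h1 : cF (s'' ⟨k, Nat.lt_succ_self k⟩) = v := by
      rw [hs'']
      have : ι₁ k l ⟨k, Nat.lt_succ_self k⟩ = kk k l := rfl
      rw [this, hτv]
    have h2 : cF (s' ⟨k, Nat.lt_succ_self k⟩) = v := by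
      rw [← hρc]
      have : ι₁ k l ⟨k, Nat.lt_succ_self k⟩ = kk k l := rfl
      rw [this, hρv]
    have : s'' ⟨k, Nat.lt_succ_self k⟩ = s' ⟨k, Nat.lt_succ_self k⟩ := hcinj (h1.trans h2.symm)
    simp [Equiv.trans_apply, this]
  · have h1 : bF (t 0) = v := by rw [ht, hkkι₂0, hτv]
    have h2 : bF (s 0) = v := by rw [← hρb, hkkι₂0, hρv]
    have : t 0 = s 0 := hbinj (h1.trans h2.symm)
    simp [Equiv.trans_apply, this]
  · apply Equiv.ext
    intro m
    have hmul : ∀ x, (ρ * blk k l (s''.trans s'.symm) (t.trans s.symm)) x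
        = ρ (blk k l (s''.trans s'.symm) (t.trans s.symm) x) := fun _ => rfl
    have h₁ : (s''.trans s'.symm) ⟨k, Nat.lt_succ_self k⟩ = ⟨k, Nat.lt_succ_self k⟩ := by
      have h1 : cF (s'' ⟨k, Nat.lt_succ_self k⟩) = v := by
        rw [hs'']
        have : ι₁ k l ⟨k, Nat.lt_succ_self k⟩ = kk k l := rfl
        rw [this, hτv]
      have h2 : cF (s' ⟨k, Nat.lt_succ_self k⟩) = v := by
        rw [← hρc]
        have : ι₁ k l ⟨k, Nat.lt_succ_self k⟩ = kk k l := rfl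
        rw [this, hρv]
      have : s'' ⟨k, Nat.lt_succ_self k⟩ = s' ⟨k, Nat.lt_succ_self k⟩ := hcinj (h1.trans h2.symm)
      simp [Equiv.trans_apply, this]
    have h₂ : (t.trans s.symm) 0 = 0 := by
      have h1 : bF (t 0) = v := by rw [ht, hkkι₂0, hτv]
      have h2 : bF (s 0) = v := by rw [← hρb, hkkι₂0, hρv]
      have : t 0 = s 0 := hbinj (h1.trans h2.symm)
      simp [Equiv.trans_apply, this]
    rw [hmul]
    by_cases hm : (m : ℕ) < k + 1
    · have hmeq : m = ι₁ k l ⟨(m : ℕ), hm⟩ := rfl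
      rw [hmeq, blk_apply_ι₁ k l _ _ h₂, hρc]
      simp only [Equiv.trans_apply, Equiv.apply_symm_apply]
      rw [hs'']
    · have hmlt := m.isLt
      have hmeq : m = ι₂ k l ⟨(m : ℕ) - k, by omega⟩ := by
        apply Fin.ext; simp [ι₂]; omega
      rw [hmeq, blk_apply_ι₂ k l _ _ h₁ h₂, hρb]
      simp only [Equiv.trans_apply, Equiv.apply_symm_apply]
      rw [ht]

end WH

/-- **Averaging interpretation of the discrete wedge product (second form).**
For cochains `α ∈ Cᵏ(X)`, `β ∈ Cˡ(X)` and a `(k+l)`-simplex `σ` of `X`,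
`(α ∧ β)(σ) = (1/C(k+l+1,l+1)) Σ_{f an l-face of σ} ((1/(l+1)) Σ_{v ∈ f} α(v ∗ (σ∖f))) · β(f)`.
An `l`-face `f` of `σ` is encoded by the set `F` of its positions in `σ`; its chosen
orientation is an injective ordering `b F` of `F`, and the chosen orientation of
`v ∗ (σ∖f)` is an injective ordering `c F v` of `{v} ∪ (σ∖F)`.  The hypothesis
`hcompat` says these orientations are chosen so that the vertex ordering built from
`f∖{v}`, `v` and `σ∖f` (a permutation `ρ` placing `v` at position `k`, whose first
`k+1` entries are an `s'`-rearrangement of `c F v` and whose last `l+1` entries are an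
`s`-rearrangement of `b F`, matching the cup-product block structure of `α ⌣ β`)
corresponds to an even permutation: `sgn ρ · sgn s · sgn s' = 1`. -/
theorem wedge_averaging_second_form {V : Type*} [DecidableEq V] (X : ASC V) (k l : ℕ)
    (α : (Fin (k + 1) → V) → ℝ) (hα : IsAlternating k α)
    (β : (Fin (l + 1) → V) → ℝ) (hβ : IsAlternating l β)
    (σ : Fin (k + l + 1) → V) (hσ : IsSimplex X (k + l) σ)
    (b : Finset (Fin (k + l + 1)) → Fin (l + 1) → Fin (k + l + 1))
    (c : Finset (Fin (k + l + 1)) → Fin (k + l + 1) → Fin (k + 1) → Fin (k + l + 1))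
    (hb : ∀ F ∈ Finset.powersetCard (l + 1) (Finset.univ : Finset (Fin (k + l + 1))),
      Function.Injective (b F) ∧ ∀ j, b F j ∈ F)
    (hc : ∀ F ∈ Finset.powersetCard (l + 1) (Finset.univ : Finset (Fin (k + l + 1))),
      ∀ v ∈ F, Function.Injective (c F v) ∧
        ∀ i, c F v i ∈ insert v (Finset.univ \ F))
    (hcompat : ∀ F ∈ Finset.powersetCard (l + 1) (Finset.univ : Finset (Fin (k + l + 1))),
      ∀ v ∈ F, ∃ (ρ : Equiv.Perm (Fin (k + l + 1))) (s : Equiv.Perm (Fin (l + 1)))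
        (s' : Equiv.Perm (Fin (k + 1))),
          ρ ⟨k, by omega⟩ = v ∧
          (∀ j : Fin (l + 1), ρ ⟨k + (j : ℕ), by have := j.isLt; omega⟩ = b F (s j)) ∧
          (∀ i : Fin (k + 1), ρ ⟨(i : ℕ), by have := i.isLt; omega⟩ = c F v (s' i)) ∧
          Equiv.Perm.sign ρ * Equiv.Perm.sign s * Equiv.Perm.sign s' = 1) :
    wedge k l α β σ =
      (1 / (Nat.choose (k + l + 1) (l + 1) : ℝ)) *
        ∑ F ∈ Finset.powersetCard (l + 1) (Finset.univ : Finset (Fin (k + l + 1))),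
          ((1 / (l + 1 : ℝ)) * ∑ v ∈ F, α (σ ∘ c F v)) * β (σ ∘ b F) := by
  classical
  have hι₂inj : ∀ τ : Equiv.Perm (Fin (k+l+1)), Function.Injective (fun j => τ (WH.ι₂ k l j)) :=
    fun τ a b h => WH.ι₂_inj k l (τ.injective h)
  have h0kk : WH.ι₂ k l 0 = WH.kk k l := by
    apply Fin.ext; simp [WH.ι₂, WH.kk]
  have key : (∑ τ : Equiv.Perm (Fin (k + l + 1)),
        ((Equiv.Perm.sign τ : ℤ) : ℝ) * cup k l α β (σ ∘ τ))
      = ∑ F ∈ Finset.powersetCard (l + 1) (Finset.univ : Finset (Fin (k + l + 1))),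
          ∑ v ∈ F, (((Nat.factorial k * Nat.factorial l : ℕ) : ℝ))
            * (α (σ ∘ c F v) * β (σ ∘ b F)) := by
    rw [← Finset.sum_fiberwise_of_maps_to
      (g := fun τ : Equiv.Perm (Fin (k+l+1)) =>
        Finset.image (fun j => τ (WH.ι₂ k l j)) Finset.univ)
      (t := Finset.powersetCard (l + 1) (Finset.univ : Finset (Fin (k + l + 1))))
      (fun τ _ => by
        rw [Finset.mem_powersetCard]
        exact ⟨Finset.subset_univ _, by
          rw [Finset.card_image_of_injective _ (hι₂inj τ), Finset.card_univ, Fintype.card_fin]⟩)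
      _]
    refine Finset.sum_congr rfl fun F hF => ?_
    have hFcard : F.card = l + 1 := ((Finset.mem_powersetCard).1 hF).2
    rw [← Finset.sum_fiberwise_of_maps_to
      (g := fun τ : Equiv.Perm (Fin (k+l+1)) => τ (WH.kk k l)) (t := F)
      (fun τ hτ => by
        have h2 := (Finset.mem_filter.1 hτ).2
        rw [← h2, ← h0kk]
        exact Finset.mem_image_of_mem _ (Finset.mem_univ 0))
      _]
    refine Finset.sum_congr rfl fun v hv => ?_
    obtain ⟨ρ, s, s', hρv, hρb, hρc, hsgn⟩ := hcompat F hF v hv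
    obtain ⟨hbinj, hbmem⟩ := hb F hF
    obtain ⟨hcinj, hcmem⟩ := hc F hF v hv
    have hρv' : ρ (WH.kk k l) = v := hρv
    have hρb' : ∀ j, ρ (WH.ι₂ k l j) = b F (s j) := hρb
    have hρc' : ∀ i, ρ (WH.ι₁ k l i) = c F v (s' i) := hρc
    -- the value of each fiber element
    have hval : ∀ τ : Equiv.Perm (Fin (k+l+1)),
        Finset.image (fun j => τ (WH.ι₂ k l j)) Finset.univ = F → τ (WH.kk k l) = v →
        ((Equiv.Perm.sign τ : ℤ) : ℝ) * cup k l α β (σ ∘ τ)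
          = α (σ ∘ c F v) * β (σ ∘ b F) := by
      intro τ himgτ hτv
      obtain ⟨u₁, u₂, h₁, h₂, hdec⟩ := WH.decompose k l τ F hFcard v hv
        (b F) hbinj hbmem (c F v) hcinj hcmem ρ s s' hρv' hρb' hρc' himgτ hτv
      have hap1 : ∀ i, τ (WH.ι₁ k l i) = c F v (s' (u₁ i)) := by
        intro i
        rw [hdec]
        show ρ (WH.blk k l u₁ u₂ (WH.ι₁ k l i)) = _
        rw [WH.blk_apply_ι₁ k l _ _ h₂, hρc']
      have hap2 : ∀ j, τ (WH.ι₂ k l j) = b F (s (u₂ j)) := by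
        intro j
        rw [hdec]
        show ρ (WH.blk k l u₁ u₂ (WH.ι₂ k l j)) = _
        rw [WH.blk_apply_ι₂ k l _ _ h₁ h₂, hρb']
      have eA : (fun i : Fin (k+1) => (σ ∘ ⇑τ) ⟨(i : ℕ), by have := i.isLt; omega⟩)
          = (σ ∘ c F v) ∘ ⇑(u₁.trans s') := by
        funext i
        show σ (τ (WH.ι₁ k l i)) = σ (c F v (s' (u₁ i)))
        rw [hap1]
      have eB : (fun j : Fin (l+1) => (σ ∘ ⇑τ) ⟨k + (j : ℕ), by have := j.isLt; omega⟩)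
          = (σ ∘ b F) ∘ ⇑(u₂.trans s) := by
        funext j
        show σ (τ (WH.ι₂ k l j)) = σ (b F (s (u₂ j)))
        rw [hap2]
      have hcup : cup k l α β (σ ∘ τ)
          = α ((σ ∘ c F v) ∘ ⇑(u₁.trans s')) * β ((σ ∘ b F) ∘ ⇑(u₂.trans s)) := by
        simp only [cup]
        congr 1
        · exact congrArg α eA
        · exact congrArg β eB
      rw [hcup, hα _ (u₁.trans s'), hβ _ (u₂.trans s)]
      have hsignτ : Equiv.Perm.sign τ
          = Equiv.Perm.sign ρ * (Equiv.Perm.sign u₁ * Equiv.Perm.sign u₂) := by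
        rw [hdec, map_mul, WH.sign_blk]
      have htr1 : Equiv.Perm.sign (u₁.trans s')
          = Equiv.Perm.sign s' * Equiv.Perm.sign u₁ := by
        show Equiv.Perm.sign (s' * u₁) = _
        rw [map_mul]
      have htr2 : Equiv.Perm.sign (u₂.trans s)
          = Equiv.Perm.sign s * Equiv.Perm.sign u₂ := by
        show Equiv.Perm.sign (s * u₂) = _
        rw [map_mul]
      have hcastρ : ((Equiv.Perm.sign ρ : ℤ) : ℝ) * ((Equiv.Perm.sign s : ℤ) : ℝ)
          * ((Equiv.Perm.sign s' : ℤ) : ℝ) = 1 := by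
        have := congrArg (fun u : ℤˣ => ((u : ℤ) : ℝ)) hsgn
        simpa [Units.val_mul] using this
      have hsq1 : ((Equiv.Perm.sign u₁ : ℤ) : ℝ) * ((Equiv.Perm.sign u₁ : ℤ) : ℝ) = 1 := by
        rw [← Int.cast_mul, ← Units.val_mul, Int.units_mul_self]
        simp
      have hsq2 : ((Equiv.Perm.sign u₂ : ℤ) : ℝ) * ((Equiv.Perm.sign u₂ : ℤ) : ℝ) = 1 := by
        rw [← Int.cast_mul, ← Units.val_mul, Int.units_mul_self]
        simp
      have e1 : ((Equiv.Perm.sign τ : ℤ) : ℝ) = ((Equiv.Perm.sign ρ : ℤ) : ℝ)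
          * (((Equiv.Perm.sign u₁ : ℤ) : ℝ) * ((Equiv.Perm.sign u₂ : ℤ) : ℝ)) := by
        rw [hsignτ]; simp [Units.val_mul]
      have e2 : ((Equiv.Perm.sign (u₁.trans s') : ℤ) : ℝ)
          = ((Equiv.Perm.sign s' : ℤ) : ℝ) * ((Equiv.Perm.sign u₁ : ℤ) : ℝ) := by
        rw [htr1]; simp [Units.val_mul]
      have e3 : ((Equiv.Perm.sign (u₂.trans s) : ℤ) : ℝ)
          = ((Equiv.Perm.sign s : ℤ) : ℝ) * ((Equiv.Perm.sign u₂ : ℤ) : ℝ) := by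
        rw [htr2]; simp [Units.val_mul]
      rw [e1, e2, e3]
      linear_combination (((Equiv.Perm.sign u₁ : ℤ) : ℝ) * ((Equiv.Perm.sign u₁ : ℤ) : ℝ)
          * (((Equiv.Perm.sign u₂ : ℤ) : ℝ) * ((Equiv.Perm.sign u₂ : ℤ) : ℝ))
          * (α (σ ∘ c F v) * β (σ ∘ b F))) * hcastρ
        + (((Equiv.Perm.sign u₂ : ℤ) : ℝ) * ((Equiv.Perm.sign u₂ : ℤ) : ℝ)
          * (α (σ ∘ c F v) * β (σ ∘ b F))) * hsq1
        + (α (σ ∘ c F v) * β (σ ∘ b F)) * hsq2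
    trans ∑ _τ ∈ Finset.filter (fun τ : Equiv.Perm (Fin (k+l+1)) => τ (WH.kk k l) = v)
        (Finset.filter (fun τ : Equiv.Perm (Fin (k+l+1)) =>
          Finset.image (fun j => τ (WH.ι₂ k l j)) Finset.univ = F) Finset.univ),
        (α (σ ∘ c F v) * β (σ ∘ b F))
    · refine Finset.sum_congr rfl fun τ hτ => ?_
      have hm1 := Finset.mem_filter.1 hτ
      have hm2 := Finset.mem_filter.1 hm1.1
      exact hval τ hm2.2 hm1.2
    · rw [Finset.sum_const, nsmul_eq_mul]
      congr 1
      norm_cast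
      rw [← WH.card_fix k ⟨k, Nat.lt_succ_self k⟩, ← WH.card_fix l 0, ← Finset.card_product]
      refine (Finset.card_bij (fun (u : Equiv.Perm (Fin (k+1)) × Equiv.Perm (Fin (l+1)))
          (_ : u ∈ (Finset.univ.filter fun u : Equiv.Perm (Fin (k+1)) =>
              u ⟨k, Nat.lt_succ_self k⟩ = ⟨k, Nat.lt_succ_self k⟩) ×ˢ
            (Finset.univ.filter fun u : Equiv.Perm (Fin (l+1)) => u 0 = 0)) =>
          ρ * WH.blk k l u.1 u.2) ?_ ?_ ?_).symm
      · -- maps into the fiber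
        intro u hu
        have hu' := Finset.mem_product.1 hu
        have h₁ : u.1 ⟨k, Nat.lt_succ_self k⟩ = ⟨k, Nat.lt_succ_self k⟩ :=
          (Finset.mem_filter.1 hu'.1).2
        have h₂ : u.2 0 = 0 := (Finset.mem_filter.1 hu'.2).2
        have hap2 : ∀ j, (ρ * WH.blk k l u.1 u.2) (WH.ι₂ k l j) = b F (s (u.2 j)) := by
          intro j
          show ρ (WH.blk k l u.1 u.2 (WH.ι₂ k l j)) = _
          rw [WH.blk_apply_ι₂ k l _ _ h₁ h₂, hρb']
        rw [Finset.mem_filter, Finset.mem_filter]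
        refine ⟨⟨Finset.mem_univ _, ?_⟩, ?_⟩
        · have himg1 : Finset.image (fun j => (ρ * WH.blk k l u.1 u.2) (WH.ι₂ k l j)) Finset.univ
              = Finset.image (fun j => b F (s (u.2 j))) Finset.univ :=
            Finset.image_congr (fun j _ => hap2 j)
          rw [himg1]
          have himg2 : Finset.image (fun j => b F (s (u.2 j))) Finset.univ
              = Finset.image (b F) (Finset.image ⇑(u.2.trans s) Finset.univ) :=
            (Finset.image_image).symm
          rw [himg2, Finset.image_univ_equiv]
          exact WH.image_eq_of_inj_of_maps (b F) hbinj F hbmem hFcard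
        · have : WH.kk k l = WH.ι₁ k l ⟨k, Nat.lt_succ_self k⟩ := rfl
          rw [this]
          show ρ (WH.blk k l u.1 u.2 (WH.ι₁ k l ⟨k, Nat.lt_succ_self k⟩)) = v
          rw [WH.blk_apply_ι₁ k l _ _ h₂, h₁]
          exact hρv'
      · -- injective
        intro a ha a' ha' h
        have hblk : WH.blk k l a.1 a.2 = WH.blk k l a'.1 a'.2 := mul_left_cancel h
        have hpa := Finset.mem_product.1 ha
        have hpa' := Finset.mem_product.1 ha'
        have h₂a : a.2 0 = 0 := (Finset.mem_filter.1 hpa.2).2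
        have h₂a' : a'.2 0 = 0 := (Finset.mem_filter.1 hpa'.2).2
        have h₁a : a.1 ⟨k, Nat.lt_succ_self k⟩ = ⟨k, Nat.lt_succ_self k⟩ :=
          (Finset.mem_filter.1 hpa.1).2
        have h₁a' : a'.1 ⟨k, Nat.lt_succ_self k⟩ = ⟨k, Nat.lt_succ_self k⟩ :=
          (Finset.mem_filter.1 hpa'.1).2
        have e1 : a.1 = a'.1 := by
          apply Equiv.ext
          intro i
          apply WH.ι₁_inj k l
          rw [← WH.blk_apply_ι₁ k l a.1 a.2 h₂a i, ← WH.blk_apply_ι₁ k l a'.1 a'.2 h₂a' i, hblk]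
        have e2 : a.2 = a'.2 := by
          apply Equiv.ext
          intro j
          apply WH.ι₂_inj k l
          rw [← WH.blk_apply_ι₂ k l a.1 a.2 h₁a h₂a j,
            ← WH.blk_apply_ι₂ k l a'.1 a'.2 h₁a' h₂a' j, hblk]
        exact Prod.ext e1 e2
      · -- surjective
        intro τ hτ
        have hm1 := Finset.mem_filter.1 hτ
        have hm2 := Finset.mem_filter.1 hm1.1
        obtain ⟨u₁, u₂, h₁, h₂, hdec⟩ := WH.decompose k l τ F hFcard v hv
          (b F) hbinj hbmem (c F v) hcinj hcmem ρ s s' hρv' hρb' hρc' hm2.2 hm1.2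
        refine ⟨(u₁, u₂), ?_, hdec.symm⟩
        rw [Finset.mem_product]
        exact ⟨Finset.mem_filter.2 ⟨Finset.mem_univ _, h₁⟩,
          Finset.mem_filter.2 ⟨Finset.mem_univ _, h₂⟩⟩
  show (1 / (Nat.factorial (k + l + 1) : ℝ)) * _ = _
  rw [key, Finset.mul_sum, Finset.mul_sum]
  refine Finset.sum_congr rfl fun F hF => ?_
  rw [Finset.mul_sum]
  have hrhs : (1 / (Nat.choose (k + l + 1) (l + 1) : ℝ))
        * (((1 / (l + 1 : ℝ)) * ∑ v ∈ F, α (σ ∘ c F v)) * β (σ ∘ b F))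
      = ∑ v ∈ F, (1 / (Nat.choose (k + l + 1) (l + 1) : ℝ))
          * ((1 / (l + 1 : ℝ)) * (α (σ ∘ c F v) * β (σ ∘ b F))) := by
    simp only [Finset.mul_sum, Finset.sum_mul]
    exact Finset.sum_congr rfl fun v _ => by ring
  rw [hrhs]
  refine Finset.sum_congr rfl fun v _ => ?_
  have hC : Nat.choose (k+l+1) (l+1) * Nat.factorial (l+1) * Nat.factorial k
      = Nat.factorial (k+l+1) := by
    have h := Nat.choose_mul_factorial_mul_factorial (show l + 1 ≤ k + l + 1 by omega)
    have h2 : k + l + 1 - (l + 1) = k := by omega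
    rwa [h2] at h
  have hCR : ((Nat.choose (k+l+1) (l+1) : ℝ)) * (((l : ℝ) + 1) * (Nat.factorial l : ℝ))
      * (Nat.factorial k : ℝ) = (Nat.factorial (k+l+1) : ℝ) := by
    have := congrArg (Nat.cast : ℕ → ℝ) hC
    rw [Nat.factorial_succ] at this
    push_cast at this
    linarith [this]
  have hC0 : ((Nat.choose (k+l+1) (l+1) : ℝ)) ≠ 0 := by
    have := Nat.choose_pos (show l + 1 ≤ k + l + 1 by omega)
    positivity
  have hl0 : ((l : ℝ) + 1) ≠ 0 := by positivity
  have hf0 : ((Nat.factorial (k+l+1) : ℝ)) ≠ 0 := by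
    have := Nat.factorial_pos (k+l+1)
    positivity
  have hcoeff : (1 / (Nat.factorial (k + l + 1) : ℝ))
        * ((Nat.factorial k * Nat.factorial l : ℕ) : ℝ)
      = (1 / (Nat.choose (k + l + 1) (l + 1) : ℝ)) * (1 / ((l : ℝ) + 1)) := by
    push_cast
    field_simp
    linear_combination hCR
  calc (1 / (Nat.factorial (k + l + 1) : ℝ))
        * (((Nat.factorial k * Nat.factorial l : ℕ) : ℝ) * (α (σ ∘ c F v) * β (σ ∘ b F)))
      = ((1 / (Nat.factorial (k + l + 1) : ℝ))
          * ((Nat.factorial k * Nat.factorial l : ℕ) : ℝ)) * (α (σ ∘ c F v) * β (σ ∘ b F)) := by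
        ring
    _ = ((1 / (Nat.choose (k + l + 1) (l + 1) : ℝ)) * (1 / ((l : ℝ) + 1)))
          * (α (σ ∘ c F v) * β (σ ∘ b F)) := by rw [hcoeff]
    _ = (1 / (Nat.choose (k + l + 1) (l + 1) : ℝ))
          * ((1 / (l + 1 : ℝ)) * (α (σ ∘ c F v) * β (σ ∘ b F))) := by ring
end

section
/- The discrete wedge product is not associative: let X be the simplicial complex consisting of a single edge [01] and its vertices, and let α, β ∈ C^0(X) and ω ∈ C^1(X) be the cochains with α(0) = 1, α(1) = 0, β(0) = 0, β(1) = 1, and ω([01]) = 1. Then ((α ∧ β) ∧ ω)([01]) = (α(0)β(0) + α(1)β(1))/2 · ω([01]) = 0, while (α ∧ (β ∧ ω))([01]) = (α(0)+α(1))/2 · (β(0)+β(1))/2 · ω([01]) = 1/4, so ((α ∧ β) ∧ ω)([01]) ≠ (α ∧ (β ∧ ω))([01]). -/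
open Finset
open scoped Classical

variable {V W : Type*} [DecidableEq V] [DecidableEq W]

/-- The simplicial complex consisting of a single edge `[01]` and its vertices. -/
def edgeComplex : ASC (Fin 2) where
  faces := {s | s.Nonempty}
  nonempty_of_mem _ hs := hs
  down_closed _ _ _ _ ht := ht

lemma perm2_univ : (Finset.univ : Finset (Equiv.Perm (Fin 2))) = {1, Equiv.swap 0 1} := by
  decide

lemma perm2_sum (f : Equiv.Perm (Fin 2) → ℝ) :
    ∑ τ : Equiv.Perm (Fin 2), f τ = f 1 + f (Equiv.swap 0 1) := by
  rw [perm2_univ, Finset.sum_insert (by decide), Finset.sum_singleton]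

lemma perm1_sum (f : Equiv.Perm (Fin 1) → ℝ) :
    ∑ τ : Equiv.Perm (Fin 1), f τ = f 1 := by
  have h : (Finset.univ : Finset (Equiv.Perm (Fin 1))) = {1} := by decide
  rw [h, Finset.sum_singleton]

lemma comp_swap01 : (![0, 1] : Fin 2 → Fin 2) ∘ (Equiv.swap 0 1) = ![1, 0] := by
  funext i; fin_cases i <;> rfl

lemma comp_swap10 : (![1, 0] : Fin 2 → Fin 2) ∘ (Equiv.swap 0 1) = ![0, 1] := by
  funext i; fin_cases i <;> rfl

lemma wedge01_eval (f : (Fin 1 → Fin 2) → ℝ) (η : (Fin 2 → Fin 2) → ℝ)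
    (v : Fin 2 → Fin 2) :
    wedge 0 1 f η v
      = (1 / 2) * (f ![v 0] * η v - f ![v 1] * η (v ∘ Equiv.swap 0 1)) := by
  simp only [wedge, cup, Nat.reduceAdd]
  rw [perm2_sum]
  have e1 : ∀ w : Fin 2 → Fin 2,
      (fun i : Fin 1 => w ⟨(i : ℕ), by have := i.isLt; omega⟩) = ![w 0] := by
    intro w; funext i; fin_cases i <;> rfl
  have e2 : ∀ w : Fin 2 → Fin 2,
      (fun i : Fin 2 => w ⟨0 + (i : ℕ), by have := i.isLt; omega⟩) = w := by
    intro w; funext i; exact congrArg w (by ext; simp)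
  rw [e1, e1, e2, e2]
  have c1 : v ∘ (1 : Equiv.Perm (Fin 2)) = v := rfl
  rw [c1]
  have s1 : ((Equiv.Perm.sign (1 : Equiv.Perm (Fin 2)) : ℤ) : ℝ) = 1 := by simp
  have s2 : ((Equiv.Perm.sign (Equiv.swap (0 : Fin 2) 1) : ℤ) : ℝ) = -1 := by
    rw [Equiv.Perm.sign_swap (by decide)]; norm_num
  rw [s1, s2]
  have c2 : (v ∘ Equiv.swap 0 1) 0 = v 1 := by simp
  rw [c2]
  show (1 / (Nat.factorial 2 : ℝ)) * _ = _
  norm_num [Nat.factorial]; ring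

/-- **The discrete wedge product is not associative**: on the edge complex `X = [01]`,
for the 0-cochains `α` (with `α(0)=1, α(1)=0`), `β` (with `β(0)=0, β(1)=1`) and the
1-cochain `ω` with `ω([01])=1`, one has `((α∧β)∧ω)([01]) = 0` while
`(α∧(β∧ω))([01]) = 1/4`, so the two differ. -/
theorem wedge_not_associative
    (α β : (Fin 1 → Fin 2) → ℝ) (ω : (Fin 2 → Fin 2) → ℝ)
    (hα : IsAlternating 0 α) (hβ : IsAlternating 0 β) (hω : IsAlternating 1 ω)
    (hXα : IsSimplex edgeComplex 1 ![0, 1])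
    (hα0 : α ![0] = 1) (hα1 : α ![1] = 0)
    (hβ0 : β ![0] = 0) (hβ1 : β ![1] = 1)
    (hω01 : ω ![0, 1] = 1) :
    wedge 0 1 (wedge 0 0 α β) ω ![0, 1] = 0 ∧
      wedge 0 1 α (wedge 0 1 β ω) ![0, 1] = 1 / 4 ∧
      wedge 0 1 (wedge 0 0 α β) ω ![0, 1] ≠ wedge 0 1 α (wedge 0 1 β ω) ![0, 1] := by
  have hω10 : ω ![1, 0] = -1 := by
    have h := hω ![0, 1] (Equiv.swap 0 1)
    rw [comp_swap01, hω01, Equiv.Perm.sign_swap (by decide)] at h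
    norm_num at h
    exact h
  have hg : ∀ v : Fin 1 → Fin 2, wedge 0 0 α β v = α v * β v := by
    intro v
    simp only [wedge, cup, Nat.reduceAdd]
    rw [perm1_sum]
    have h1 : (fun i : Fin 1 => (v ∘ (1 : Equiv.Perm (Fin 1))) ⟨(i : ℕ), by have := i.isLt; omega⟩) = v := by
      funext i; fin_cases i <;> rfl
    have h2 : (fun i : Fin 1 => (v ∘ (1 : Equiv.Perm (Fin 1))) ⟨0 + (i : ℕ), by have := i.isLt; omega⟩) = v := by
      funext i; fin_cases i <;> rfl
    rw [h1, h2]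
    norm_num [Nat.factorial]
  have hg0 : wedge 0 0 α β ![0] = 0 := by rw [hg]; rw [hα0, hβ0]; ring
  have hg1 : wedge 0 0 α β ![1] = 0 := by rw [hg]; rw [hα1, hβ1]; ring
  have v01_0 : (![0, 1] : Fin 2 → Fin 2) 0 = 0 := rfl
  have v01_1 : (![0, 1] : Fin 2 → Fin 2) 1 = 1 := rfl
  have v10_0 : (![1, 0] : Fin 2 → Fin 2) 0 = 1 := rfl
  have v10_1 : (![1, 0] : Fin 2 → Fin 2) 1 = 0 := rfl
  have hη : wedge 0 1 β ω ![0, 1] = 1 / 2 := by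
    rw [wedge01_eval, comp_swap01, v01_0, v01_1, hβ0, hβ1, hω01, hω10]; ring
  have hη' : wedge 0 1 β ω ![1, 0] = -(1 / 2) := by
    rw [wedge01_eval, comp_swap10, v10_0, v10_1, hβ0, hβ1, hω01, hω10]; ring
  have h1 : wedge 0 1 (wedge 0 0 α β) ω ![0, 1] = 0 := by
    rw [wedge01_eval, comp_swap01, v01_0, v01_1, hg0, hg1]; ring
  have h2 : wedge 0 1 α (wedge 0 1 β ω) ![0, 1] = 1 / 4 := by
    rw [wedge01_eval, comp_swap01, v01_0, v01_1, hα0, hα1, hη, hη']; ring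
  exact ⟨h1, h2, by rw [h1, h2]; norm_num⟩
end

section
/- The discrete wedge product is graded anti-commutative: let X be an abstract simplicial complex, α ∈ C^k(X) and β ∈ C^l(X). Then for every (k+l)-simplex σ of X, (α ∧ β)(σ) = (−1)^{kl} (β ∧ α)(σ), i.e. α ∧ β = (−1)^{kl} β ∧ α in C^{k+l}(X). -/
open Finset
open scoped Classical

variable {V W : Type*} [DecidableEq V] [DecidableEq W]

section WedgeAux

open Equiv

lemma revPerm_eq_mul_aux (n : ℕ) :
    (Fin.revPerm : Equiv.Perm (Fin (n+1))) =
      (finRotate (n+1))⁻¹ *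
        Equiv.Perm.decomposeFin.symm (0, (Fin.revPerm : Equiv.Perm (Fin n))) := by
  rw [eq_inv_mul_iff_mul_eq]
  ext i
  refine Fin.cases ?_ (fun x => ?_) i
  · simp [Equiv.Perm.mul_apply]
  · rw [Equiv.Perm.mul_apply]
    simp only [Fin.revPerm_apply, Equiv.Perm.decomposeFin_symm_apply_succ, Equiv.swap_self,
      Equiv.refl_apply]
    simp only [finRotate_succ_apply, Fin.val_add_one, Fin.val_rev, Fin.val_succ]
    split_ifs with h
    · have := congrArg Fin.val h
      simp [Fin.val_rev] at this
      omega
    · omega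

lemma sign_revPerm_aux (n : ℕ) :
    Equiv.Perm.sign (Fin.revPerm : Equiv.Perm (Fin (n+1))) = (-1) ^ (n*(n+1)/2) := by
  induction n with
  | zero =>
    have : (Fin.revPerm : Equiv.Perm (Fin 1)) = 1 := Subsingleton.elim _ _
    simp [this]
  | succ n ih =>
    rw [revPerm_eq_mul_aux]
    rw [map_mul, map_inv, sign_finRotate, Equiv.Perm.decomposeFin.symm_sign, ih]
    have he : (n+1)*(n+2)/2 = n*(n+1)/2 + (n+1) := by
      have h1 : (n+1)*(n+2) = n*(n+1) + 2*(n+1) := by ring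
      obtain ⟨t, ht⟩ := Nat.even_mul_succ_self n
      omega
    simp [he, pow_add, pow_succ]
    group

lemma cup_rev_aux {V : Type*} (k l : ℕ) (α : (Fin (k + 1) → V) → ℝ) (hα : IsAlternating k α)
    (β : (Fin (l + 1) → V) → ℝ) (hβ : IsAlternating l β) (w : Fin (k + l + 1) → V) :
    cup k l α β (w ∘ ⇑(Fin.revPerm : Equiv.Perm (Fin (k + l + 1)))) =
      ((Equiv.Perm.sign (Fin.revPerm : Equiv.Perm (Fin (k + 1))) : ℤ) : ℝ) *
      ((Equiv.Perm.sign (Fin.revPerm : Equiv.Perm (Fin (l + 1))) : ℤ) : ℝ) *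
      cup l k β α (w ∘ Fin.cast (by rw [Nat.add_comm l k] : l + k + 1 = k + l + 1)) := by
  simp only [cup]
  have h1 : (fun i : Fin (k + 1) =>
        (w ∘ ⇑(Fin.revPerm : Equiv.Perm (Fin (k + l + 1)))) ⟨(i : ℕ), by have := i.isLt; omega⟩)
      = (fun i : Fin (k + 1) =>
          (w ∘ Fin.cast (by omega : l + k + 1 = k + l + 1)) ⟨l + (i : ℕ), by have := i.isLt; omega⟩)
        ∘ ⇑(Fin.revPerm : Equiv.Perm (Fin (k + 1))) := by
    funext i
    simp only [Function.comp_apply, Fin.revPerm_apply]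
    congr 1
    apply Fin.ext
    simp only [Fin.val_rev, Fin.coe_cast]
    have := i.isLt
    omega
  have h2 : (fun i : Fin (l + 1) =>
        (w ∘ ⇑(Fin.revPerm : Equiv.Perm (Fin (k + l + 1)))) ⟨k + (i : ℕ), by have := i.isLt; omega⟩)
      = (fun i : Fin (l + 1) =>
          (w ∘ Fin.cast (by omega : l + k + 1 = k + l + 1)) ⟨(i : ℕ), by have := i.isLt; omega⟩)
        ∘ ⇑(Fin.revPerm : Equiv.Perm (Fin (l + 1))) := by
    funext i
    simp only [Function.comp_apply, Fin.revPerm_apply]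
    congr 1
    apply Fin.ext
    simp only [Fin.val_rev, Fin.coe_cast]
    have := i.isLt
    omega
  rw [h1, h2, hα _ Fin.revPerm, hβ _ Fin.revPerm]
  ring

lemma sign_combine_aux (k l : ℕ) :
    ((Equiv.Perm.sign (Fin.revPerm : Equiv.Perm (Fin (k + l + 1))) : ℤ) : ℝ) *
    (((Equiv.Perm.sign (Fin.revPerm : Equiv.Perm (Fin (k + 1))) : ℤ) : ℝ) *
     ((Equiv.Perm.sign (Fin.revPerm : Equiv.Perm (Fin (l + 1))) : ℤ) : ℝ)) = (-1 : ℝ) ^ (k * l) := by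
  have hs : ∀ n : ℕ, ((Equiv.Perm.sign (Fin.revPerm : Equiv.Perm (Fin (n + 1))) : ℤ) : ℝ)
      = (-1 : ℝ) ^ (n * (n + 1) / 2) := by
    intro n
    rw [sign_revPerm_aux n]
    push_cast
    norm_num
  rw [show k + l + 1 = (k + l) + 1 from rfl, hs (k + l), hs k, hs l,
    ← pow_add, ← pow_add]
  have h1 : (k + l) * (k + l + 1) = 2 * (k * l) + k * (k + 1) + l * (l + 1) := by ring
  obtain ⟨a, ha⟩ := Nat.even_mul_succ_self k
  obtain ⟨b, hb⟩ := Nat.even_mul_succ_self l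
  have h2 : (k + l) * (k + l + 1) / 2 + (k * (k + 1) / 2 + l * (l + 1) / 2)
      = k * l + 2 * (k * (k + 1) / 2 + l * (l + 1) / 2) := by omega
  rw [h2, pow_add, pow_mul]
  norm_num

end WedgeAux

/-- **Graded anti-commutativity of the discrete wedge product**: for `α ∈ Cᵏ(X)` and
`β ∈ Cˡ(X)`, one has `(α ∧ β)(σ) = (−1)^{kl} (β ∧ α)(σ)` on every `(k+l)`-simplex
`σ` of `X`, i.e. `α ∧ β = (−1)^{kl} β ∧ α` in `C^{k+l}(X)`. -/
theorem wedge_antisymm {V : Type*} [DecidableEq V] (X : ASC V) (k l : ℕ)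
    (α : (Fin (k + 1) → V) → ℝ) (hα : IsAlternating k α)
    (β : (Fin (l + 1) → V) → ℝ) (hβ : IsAlternating l β)
    (σ : Fin (k + l + 1) → V) (hσ : IsSimplex X (k + l) σ) :
    wedge k l α β σ =
      (-1 : ℝ) ^ (k * l) *
        wedge l k β α (σ ∘ Fin.cast (by omega : l + k + 1 = k + l + 1)) := by
  have hcast : l + k + 1 = k + l + 1 := by omega
  have hfac : ((Nat.factorial (l + k + 1) : ℝ)) = (Nat.factorial (k + l + 1) : ℝ) := by
    rw [Nat.add_comm l k]
  have step1 :
      (∑ τ : Equiv.Perm (Fin (l + k + 1)), ((Equiv.Perm.sign τ : ℤ) : ℝ) *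
          cup l k β α ((σ ∘ Fin.cast hcast) ∘ τ))
    = ∑ τ : Equiv.Perm (Fin (k + l + 1)), ((Equiv.Perm.sign τ : ℤ) : ℝ) *
          cup l k β α ((σ ∘ τ) ∘ Fin.cast hcast) := by
    apply Fintype.sum_equiv (Equiv.permCongr (finCongr hcast))
    intro τ
    rw [Equiv.Perm.sign_permCongr]
    have harg : (σ ∘ Fin.cast hcast) ∘ ⇑τ
        = (σ ∘ ⇑((finCongr hcast).permCongr τ)) ∘ Fin.cast hcast := by
      funext x
      apply congrArg σ
      apply Fin.ext
      simp [Equiv.permCongr_apply, finCongr_apply, finCongr_symm, Fin.coe_cast]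
    rw [harg]
  have step2 :
      (∑ τ : Equiv.Perm (Fin (k + l + 1)), ((Equiv.Perm.sign τ : ℤ) : ℝ) *
          cup k l α β (σ ∘ τ))
    = (-1 : ℝ) ^ (k * l) *
      ∑ τ : Equiv.Perm (Fin (k + l + 1)), ((Equiv.Perm.sign τ : ℤ) : ℝ) *
          cup l k β α ((σ ∘ τ) ∘ Fin.cast hcast) := by
    rw [← Equiv.sum_comp (Equiv.mulRight (Fin.revPerm : Equiv.Perm (Fin (k + l + 1))))
      (fun τ : Equiv.Perm (Fin (k + l + 1)) =>
        ((Equiv.Perm.sign τ : ℤ) : ℝ) * cup k l α β (σ ∘ τ)), Finset.mul_sum]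
    apply Finset.sum_congr rfl
    intro τ _
    simp only [Equiv.coe_mulRight]
    have hcoe : σ ∘ ⇑(τ * (Fin.revPerm : Equiv.Perm (Fin (k + l + 1))))
        = (σ ∘ ⇑τ) ∘ ⇑(Fin.revPerm : Equiv.Perm (Fin (k + l + 1))) := rfl
    rw [hcoe, cup_rev_aux k l α hα β hβ (σ ∘ ⇑τ), map_mul]
    rw [show cup l k β α ((σ ∘ ⇑τ) ∘ Fin.cast (by omega : l + k + 1 = k + l + 1))
        = cup l k β α ((σ ∘ ⇑τ) ∘ Fin.cast hcast) from rfl]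
    rw [← sign_combine_aux k l]
    push_cast
    ring
  unfold wedge
  rw [step2, hfac, ← step1]
  ring
end
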